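/- Let n, k be positive integers with k even, let δ ≥ 0, and let Z⁽¹⁾, Z⁽²⁾, Z_init ∈ {0,1}^{n×k}. For t ∈ {1,2}, define x⁽ᵗ⁾ := 2·∑_{a=1}^{k/2} Z⁽ᵗ⁾(·,a) − 𝟙 ∈ ℝⁿ. Let ξ⁽¹⁾, ξ⁽²⁾ ∈ {0,1}ⁿ. Assume: (i) ‖Z⁽ᵗ⁾(·,a) − Z_init(·,a)‖² ≤ 0.001·n/k for every a ∈ {1,…,k/2} and t ∈ {1,2}; (ii) ‖∑_{a=1}^{k/2} Z⁽ᵗ⁾(·,a) − ∑_{a=1}^{k/2} Z_init(·,a)‖² ≤ 0.001·n for t ∈ {1,2}; (iii) ∑_i ξ⁽ᵗ⁾_i ≤ δ·n for t ∈ {1,2}. Define v := (𝟙 − x⁽¹⁾ ⊙ x⁽²⁾)/2, s := 𝟙 − (𝟙 − ξ⁽¹⁾) ⊙ (𝟙 − ξ⁽²⁾), and w := v ⊙ (𝟙 − s). Then: (a) ‖v‖² ≤ 0.004·n; (b) ‖s‖² ≤ 2·δ·n; (c) ‖w‖² ≤ 0.004·n; and (d) ⟨Z⁽ᵗ⁾(·,b),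 w⟩ ≤ 0.004·n/k for every b ∈ {1,…,k/2} and t ∈ {1,2}. -/

import Mathlib

set_option autoImplicit false

lemma sum01_aux {k : ℕ} (Z : Fin k → ℝ) (h01 : ∀ a, Z a = 0 ∨ Z a = 1)
    (hrow : ∑ a, Z a = 1) (T : Finset (Fin k)) :
    ∑ a ∈ T, Z a = 0 ∨ ∑ a ∈ T, Z a = 1 := by
  by_cases h : ∀ a ∈ T, Z a = 0
  · left; exact Finset.sum_eq_zero h
  · right
    push_neg at h
    obtain ⟨a, haT, ha⟩ := h
    have ha1 : Z a = 1 := (h01 a).resolve_left ha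
    have hz : ∀ b ∈ T, b ≠ a → Z b = 0 := by
      intro b _ hb
      by_contra hb0
      have hb1 : Z b = 1 := (h01 b).resolve_left hb0
      have hpair : ∑ c ∈ ({a, b} : Finset (Fin k)), Z c = 2 := by
        rw [Finset.sum_pair (Ne.symm hb)]; rw [ha1, hb1]; norm_num
      have hle : ∑ c ∈ ({a, b} : Finset (Fin k)), Z c ≤ ∑ c, Z c := by
        apply Finset.sum_le_sum_of_subset_of_nonneg (Finset.subset_univ _)
        intro c _ _
        rcases h01 c with h | h <;> rw [h] <;> norm_num
      rw [hpair, hrow] at hle; linarith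
    rw [Finset.sum_eq_single_of_mem a haT hz, ha1]

/-- (Agreement lemma for bisections.) With `Z⁽¹⁾, Z⁽²⁾, Z_init ∈
{0,1}^{n×k}` (rows of `Z⁽¹⁾, Z⁽²⁾` summing to 1), induced bisections
`x⁽ᵗ⁾ = 2∑_{a<k/2} Z⁽ᵗ⁾(·,a) − 𝟙`, masks `ξ⁽ᵗ⁾ ∈ {0,1}ⁿ` of size `≤ δn`, and the
closeness hypotheses (i)–(ii) to `Z_init`, the vectors `v, s, w` satisfy
`‖v‖² ≤ 0.004n`, `‖s‖² ≤ 2δn`, `‖w‖² ≤ 0.004n`, and `⟨Z⁽ᵗ⁾(·,b), w⟩ ≤ 0.004n/k`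
for all `b < k/2` and `t ∈ {1,2}`. -/
theorem stmt_18 (n k : ℕ) (hn : 0 < n) (hk : 0 < k) (hkeven : Even k)
    (δ : ℝ) (hδ : 0 ≤ δ)
    (Z₁ Z₂ Zinit : Fin n → Fin k → ℝ)
    (hZ₁01 : ∀ i a, Z₁ i a = 0 ∨ Z₁ i a = 1)
    (hZ₂01 : ∀ i a, Z₂ i a = 0 ∨ Z₂ i a = 1)
    (hZinit01 : ∀ i a, Zinit i a = 0 ∨ Zinit i a = 1)
    (hrow₁ : ∀ i, ∑ a, Z₁ i a = 1) (hrow₂ : ∀ i, ∑ a, Z₂ i a = 1)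
    (ξ₁ ξ₂ : Fin n → ℝ)
    (hξ₁01 : ∀ i, ξ₁ i = 0 ∨ ξ₁ i = 1) (hξ₂01 : ∀ i, ξ₂ i = 0 ∨ ξ₂ i = 1)
    (x₁ x₂ : Fin n → ℝ)
    (hx₁ : ∀ i, x₁ i =
      2 * (∑ a ∈ Finset.univ.filter (fun a : Fin k => (a : ℕ) < k / 2), Z₁ i a) - 1)
    (hx₂ : ∀ i, x₂ i =
      2 * (∑ a ∈ Finset.univ.filter (fun a : Fin k => (a : ℕ) < k / 2), Z₂ i a) - 1)
    (hcol₁ : ∀ a : Fin k, (a : ℕ) < k / 2 →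
      ∑ i, (Z₁ i a - Zinit i a) ^ 2 ≤ 0.001 * n / k)
    (hcol₂ : ∀ a : Fin k, (a : ℕ) < k / 2 →
      ∑ i, (Z₂ i a - Zinit i a) ^ 2 ≤ 0.001 * n / k)
    (hsum₁ : ∑ i, ((∑ a ∈ Finset.univ.filter (fun a : Fin k => (a : ℕ) < k / 2), Z₁ i a)
      - ∑ a ∈ Finset.univ.filter (fun a : Fin k => (a : ℕ) < k / 2), Zinit i a) ^ 2
      ≤ 0.001 * n)
    (hsum₂ : ∑ i, ((∑ a ∈ Finset.univ.filter (fun a : Fin k => (a : ℕ) < k / 2), Z₂ i a)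
      - ∑ a ∈ Finset.univ.filter (fun a : Fin k => (a : ℕ) < k / 2), Zinit i a) ^ 2
      ≤ 0.001 * n)
    (hξsum₁ : ∑ i, ξ₁ i ≤ δ * n) (hξsum₂ : ∑ i, ξ₂ i ≤ δ * n)
    (v s w : Fin n → ℝ)
    (hv : ∀ i, v i = (1 - x₁ i * x₂ i) / 2)
    (hs : ∀ i, s i = 1 - (1 - ξ₁ i) * (1 - ξ₂ i))
    (hw : ∀ i, w i = v i * (1 - s i)) :
    (∑ i, (v i) ^ 2 ≤ 0.004 * n) ∧
      (∑ i, (s i) ^ 2 ≤ 2 * δ * n) ∧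
      (∑ i, (w i) ^ 2 ≤ 0.004 * n) ∧
      (∀ b : Fin k, (b : ℕ) < k / 2 →
        (∑ i, Z₁ i b * w i ≤ 0.004 * n / k) ∧ (∑ i, Z₂ i b * w i ≤ 0.004 * n / k)) := by
  set T := Finset.univ.filter (fun a : Fin k => (a : ℕ) < k / 2) with hT
  have hS₁ : ∀ i, (∑ a ∈ T, Z₁ i a) = 0 ∨ (∑ a ∈ T, Z₁ i a) = 1 :=
    fun i => sum01_aux (Z₁ i) (hZ₁01 i) (hrow₁ i) T
  have hS₂ : ∀ i, (∑ a ∈ T, Z₂ i a) = 0 ∨ (∑ a ∈ T, Z₂ i a) = 1 :=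
    fun i => sum01_aux (Z₂ i) (hZ₂01 i) (hrow₂ i) T
  have hveq : ∀ i, v i = ((∑ a ∈ T, Z₁ i a) - (∑ a ∈ T, Z₂ i a)) ^ 2 := by
    intro i
    rcases hS₁ i with h1 | h1 <;> rcases hS₂ i with h2 | h2 <;>
      rw [hv i, hx₁ i, hx₂ i, h1, h2] <;> norm_num
  have hv01 : ∀ i, v i = 0 ∨ v i = 1 := by
    intro i
    rcases hS₁ i with h1 | h1 <;> rcases hS₂ i with h2 | h2 <;>
      rw [hveq i, h1, h2] <;> norm_num
  have hs01 : ∀ i, s i = 0 ∨ s i = 1 := by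
    intro i
    rcases hξ₁01 i with h1 | h1 <;> rcases hξ₂01 i with h2 | h2 <;>
      rw [hs i, h1, h2] <;> norm_num
  have hw01 : ∀ i, w i = 0 ∨ w i = 1 := by
    intro i
    rcases hv01 i with h1 | h1 <;> rcases hs01 i with h2 | h2 <;>
      rw [hw i, h1, h2] <;> norm_num
  have parta : ∑ i, (v i) ^ 2 ≤ 0.004 * n := by
    have key : ∀ i ∈ Finset.univ, v i ^ 2 ≤
        2 * ((∑ a ∈ T, Z₁ i a) - (∑ a ∈ T, Zinit i a)) ^ 2 +
        2 * ((∑ a ∈ T, Z₂ i a) - (∑ a ∈ T, Zinit i a)) ^ 2 := by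
      intro i _
      have h2 : v i ^ 2 = v i := by rcases hv01 i with h | h <;> rw [h] <;> ring
      rw [h2, hveq i]
      nlinarith [sq_nonneg ((∑ a ∈ T, Z₁ i a) + (∑ a ∈ T, Z₂ i a) - 2 * (∑ a ∈ T, Zinit i a))]
    calc ∑ i, (v i) ^ 2 ≤ ∑ i, (2 * ((∑ a ∈ T, Z₁ i a) - (∑ a ∈ T, Zinit i a)) ^ 2 +
        2 * ((∑ a ∈ T, Z₂ i a) - (∑ a ∈ T, Zinit i a)) ^ 2) := Finset.sum_le_sum key
      _ = 2 * (∑ i, ((∑ a ∈ T, Z₁ i a) - (∑ a ∈ T, Zinit i a)) ^ 2) +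
          2 * (∑ i, ((∑ a ∈ T, Z₂ i a) - (∑ a ∈ T, Zinit i a)) ^ 2) := by
        rw [Finset.sum_add_distrib, Finset.mul_sum, Finset.mul_sum]
      _ ≤ 2 * (0.001 * n) + 2 * (0.001 * n) := by
        have h1 := hsum₁
        have h2 := hsum₂
        linarith
      _ = 0.004 * n := by ring
  refine ⟨parta, ?_, ?_, ?_⟩
  · have key : ∀ i ∈ Finset.univ, s i ^ 2 ≤ ξ₁ i + ξ₂ i := by
      intro i _
      rcases hξ₁01 i with h1 | h1 <;> rcases hξ₂01 i with h2 | h2 <;>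
        rw [hs i, h1, h2] <;> norm_num
    calc ∑ i, (s i) ^ 2 ≤ ∑ i, (ξ₁ i + ξ₂ i) := Finset.sum_le_sum key
      _ = (∑ i, ξ₁ i) + (∑ i, ξ₂ i) := Finset.sum_add_distrib
      _ ≤ δ * n + δ * n := add_le_add hξsum₁ hξsum₂
      _ = 2 * δ * n := by ring
  · have key : ∀ i ∈ Finset.univ, w i ^ 2 ≤ v i ^ 2 := by
      intro i _
      rcases hv01 i with h1 | h1 <;> rcases hs01 i with h2 | h2 <;>
        rw [hw i, h1, h2] <;> norm_num
    calc ∑ i, (w i) ^ 2 ≤ ∑ i, (v i) ^ 2 := Finset.sum_le_sum key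
      _ ≤ 0.004 * n := parta
  · intro b hb
    have hbT : b ∈ T := by rw [hT]; simp [hb]
    have hwle1 : ∀ i, w i ≤ 1 := by
      intro i; rcases hw01 i with h | h <;> rw [h] <;> norm_num
    have hw0 : ∀ i, Z₁ i b = 1 → Z₂ i b = 1 → w i = 0 := by
      intro i h1 h2
      have hle1 : (1 : ℝ) ≤ ∑ a ∈ T, Z₁ i a := by
        have := Finset.single_le_sum (f := fun a => Z₁ i a)
          (fun a _ => by show (0:ℝ) ≤ Z₁ i a; rcases hZ₁01 i a with h | h <;> rw [h] <;> norm_num) hbT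
        simpa [h1] using this
      have hle2 : (1 : ℝ) ≤ ∑ a ∈ T, Z₂ i a := by
        have := Finset.single_le_sum (f := fun a => Z₂ i a)
          (fun a _ => by show (0:ℝ) ≤ Z₂ i a; rcases hZ₂01 i a with h | h <;> rw [h] <;> norm_num) hbT
        simpa [h2] using this
      have hS1 : ∑ a ∈ T, Z₁ i a = 1 := (hS₁ i).resolve_left (by intro h; linarith)
      have hS2 : ∑ a ∈ T, Z₂ i a = 1 := (hS₂ i).resolve_left (by intro h; linarith)
      have hv0 : v i = 0 := by rw [hveq i, hS1, hS2]; norm_num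
      rw [hw i, hv0]; ring
    have key₁ : ∀ i ∈ Finset.univ, Z₁ i b * w i ≤
        2 * (Z₁ i b - Zinit i b) ^ 2 + 2 * (Z₂ i b - Zinit i b) ^ 2 := by
      intro i _
      rcases hZ₁01 i b with h1 | h1
      · rw [h1]; nlinarith [sq_nonneg (Z₁ i b - Zinit i b), sq_nonneg (Z₂ i b - Zinit i b)]
      · rcases hZ₂01 i b with h2 | h2
        · rw [h1, h2]; nlinarith [sq_nonneg (2 * Zinit i b - 1), hwle1 i]
        · rw [hw0 i h1 h2]
          nlinarith [sq_nonneg (Z₁ i b - Zinit i b), sq_nonneg (Z₂ i b - Zinit i b)]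
    have key₂ : ∀ i ∈ Finset.univ, Z₂ i b * w i ≤
        2 * (Z₁ i b - Zinit i b) ^ 2 + 2 * (Z₂ i b - Zinit i b) ^ 2 := by
      intro i _
      rcases hZ₂01 i b with h2 | h2
      · rw [h2]; nlinarith [sq_nonneg (Z₁ i b - Zinit i b), sq_nonneg (Z₂ i b - Zinit i b)]
      · rcases hZ₁01 i b with h1 | h1
        · rw [h1, h2]; nlinarith [sq_nonneg (2 * Zinit i b - 1), hwle1 i]
        · rw [hw0 i h1 h2]
          nlinarith [sq_nonneg (Z₁ i b - Zinit i b), sq_nonneg (Z₂ i b - Zinit i b)]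
    have hsum : ∑ i, (2 * (Z₁ i b - Zinit i b) ^ 2 + 2 * (Z₂ i b - Zinit i b) ^ 2)
        ≤ 0.004 * (n:ℝ) / (k:ℝ) := by
      rw [Finset.sum_add_distrib]
      have e1 : ∑ i, 2 * (Z₁ i b - Zinit i b) ^ 2 = 2 * ∑ i, (Z₁ i b - Zinit i b) ^ 2 :=
        (Finset.mul_sum _ _ _).symm
      have e2 : ∑ i, 2 * (Z₂ i b - Zinit i b) ^ 2 = 2 * ∑ i, (Z₂ i b - Zinit i b) ^ 2 :=
        (Finset.mul_sum _ _ _).symm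
      rw [e1, e2]
      have h1 := hcol₁ b hb
      have h2 := hcol₂ b hb
      have heq : (0.004 : ℝ) * n / k = 2 * (0.001 * n / k) + 2 * (0.001 * n / k) := by ring
      rw [heq]; linarith
    exact ⟨le_trans (Finset.sum_le_sum key₁) hsum, le_trans (Finset.sum_le_sum key₂) hsum⟩
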